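/- For m ≥ 2 and n ≥ 5, the number of distinct Type I(a) tandems occurring in the Fibonacci array f_{m,n} equals D(n)·p(f_m); here the count of distinct Type I(a) tandems is the sum over all sizes (r,2l) with r,l ≥ 1 of the number of distinct r × 2l arrays X such that X occurs as a subarray of f_{m,n} and the left r × l half of X equals its right r × l half, D(n) is the number of distinct squares that are factors of the 1D Fibonacci word f_n, and p(f_m) is the number of distinct nonempty factors of f_m. -/

import Mathlib

/-- Fibonacci numbers: F(0)=1, F(1)=1, F(n+2)=F(n+1)+F(n). -/
def F : ℕ → ℕ
  | 0 => 1
  | 1 => 1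
  | n + 2 => F (n + 1) + F n

/-- Finite Fibonacci words over {a,b} coded as Fin 2 (a=0, b=1). -/
def fibWord : ℕ → List (Fin 2)
  | 0 => [0]
  | 1 => [1]
  | n + 2 => fibWord (n + 1) ++ fibWord n

/-- The Fibonacci arrays f_{m,n} over {a,b,c,d} coded as Fin 2 × Fin 2,
with a=(0,0), b=(0,1), c=(1,0), d=(1,1); `fibArr m n i j` is the (i,j) entry
(0-indexed, only indices i < F m, j < F n are meaningful). -/
def fibArr : ℕ → ℕ → ℕ → ℕ → Fin 2 × Fin 2
  | 0, 0, _, _ => (0, 0)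
  | 0, 1, _, _ => (0, 1)
  | 1, 0, _, _ => (1, 0)
  | 1, 1, _, _ => (1, 1)
  | 0, n + 2, i, j =>
      if j < F (n + 1) then fibArr 0 (n + 1) i j else fibArr 0 n i (j - F (n + 1))
  | 1, n + 2, i, j =>
      if j < F (n + 1) then fibArr 1 (n + 1) i j else fibArr 1 n i (j - F (n + 1))
  | m + 2, k, i, j =>
      if i < F (m + 1) then fibArr (m + 1) k i j else fibArr m k (i - F (m + 1)) j
  termination_by m n => (m, n)

/-- The r × l subarray of u with top-left entry at (i,j). -/
def subarr (u : ℕ → ℕ → Fin 2 × Fin 2) (i j r l : ℕ) : Fin r × Fin l → Fin 2 × Fin 2 :=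
  fun p => u (i + p.1.val) (j + p.2.val)

/-- Number of square occurrences in a finite word. -/
noncomputable def sqOcc (w : List (Fin 2)) : ℕ :=
  {p : ℕ × ℕ | 1 ≤ p.2 ∧ p.1 + 2 * p.2 ≤ w.length ∧
    ∀ t < p.2, w.getD (p.1 + t) 0 = w.getD (p.1 + p.2 + t) 0}.ncard

/-- R(n): number of square occurrences in f_n. -/
noncomputable def R (n : ℕ) : ℕ := sqOcc (fibWord n)

/-- Number of distinct nonempty factors of a word. -/
noncomputable def pFact (w : List (Fin 2)) : ℕ :=
  {v : List (Fin 2) | v ≠ [] ∧ v <:+: w}.ncard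

/-- D(n): number of distinct (nonempty) squares xx occurring as factors of f_n. -/
noncomputable def D (n : ℕ) : ℕ :=
  {x : List (Fin 2) | x ≠ [] ∧ x ++ x <:+: fibWord n}.ncard

/-- The r × c array X occurs as a subarray of the Fibonacci array f_{m,n}. -/
def occursIn (m n r c : ℕ) (X : Fin r × Fin c → Fin 2 × Fin 2) : Prop :=
  ∃ i j, i + r ≤ F m ∧ j + c ≤ F n ∧
    ∀ p : Fin r × Fin c, X p = fibArr m n (i + p.1.val) (j + p.2.val)

lemma fibWord_length : ∀ n, (fibWord n).length = F n
  | 0 => rfl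
  | 1 => rfl
  | n + 2 => by
    simp [fibWord, F, fibWord_length (n + 1), fibWord_length n]

lemma fibArr_eq : ∀ m n i j, i < F m → j < F n →
    fibArr m n i j = ((fibWord m).getD i 0, (fibWord n).getD j 0)
  | 0, 0, i, j, hi, hj => by
    obtain rfl : i = 0 := by simp [F] at hi; omega
    obtain rfl : j = 0 := by simp [F] at hj; omega
    rw [fibArr]; rfl
  | 0, 1, i, j, hi, hj => by
    obtain rfl : i = 0 := by simp [F] at hi; omega
    obtain rfl : j = 0 := by simp [F] at hj; omega
    rw [fibArr]; rfl
  | 1, 0, i, j, hi, hj => by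
    obtain rfl : i = 0 := by simp [F] at hi; omega
    obtain rfl : j = 0 := by simp [F] at hj; omega
    rw [fibArr]; rfl
  | 1, 1, i, j, hi, hj => by
    obtain rfl : i = 0 := by simp [F] at hi; omega
    obtain rfl : j = 0 := by simp [F] at hj; omega
    rw [fibArr]; rfl
  | 0, n + 2, i, j, hi, hj => by
    rw [fibArr]
    by_cases h : j < F (n + 1)
    · rw [if_pos h, fibArr_eq 0 (n + 1) i j hi h]
      show _ = (_, (fibWord (n+1) ++ fibWord n).getD j 0)
      rw [List.getD_append _ _ _ _ (by rw [fibWord_length]; exact h)]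
    · rw [if_neg h, fibArr_eq 0 n i (j - F (n + 1)) hi (by simp [F] at hj; omega)]
      show _ = (_, (fibWord (n+1) ++ fibWord n).getD j 0)
      rw [List.getD_append_right _ _ _ _ (by rw [fibWord_length]; omega), fibWord_length]
  | 1, n + 2, i, j, hi, hj => by
    rw [fibArr]
    by_cases h : j < F (n + 1)
    · rw [if_pos h, fibArr_eq 1 (n + 1) i j hi h]
      show _ = (_, (fibWord (n+1) ++ fibWord n).getD j 0)
      rw [List.getD_append _ _ _ _ (by rw [fibWord_length]; exact h)]
    · rw [if_neg h, fibArr_eq 1 n i (j - F (n + 1)) hi (by simp [F] at hj; omega)]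
      show _ = (_, (fibWord (n+1) ++ fibWord n).getD j 0)
      rw [List.getD_append_right _ _ _ _ (by rw [fibWord_length]; omega), fibWord_length]
  | m + 2, k, i, j, hi, hj => by
    rw [fibArr]
    by_cases h : i < F (m + 1)
    · rw [if_pos h, fibArr_eq (m + 1) k i j h hj]
      show _ = ((fibWord (m+1) ++ fibWord m).getD i 0, _)
      rw [List.getD_append _ _ _ _ (by rw [fibWord_length]; exact h)]
    · rw [if_neg h, fibArr_eq m k (i - F (m + 1)) j (by simp [F] at hi; omega) hj]
      show _ = ((fibWord (m+1) ++ fibWord m).getD i 0, _)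
      rw [List.getD_append_right _ _ _ _ (by rw [fibWord_length]; omega), fibWord_length]
  termination_by m n => (m, n)

/-- extract of w starting at i with length c -/
def E (w : List (Fin 2)) (i c : ℕ) : List (Fin 2) := (w.drop i).take c

lemma E_length {w : List (Fin 2)} {i c : ℕ} (h : i + c ≤ w.length) : (E w i c).length = c := by
  simp [E]; omega

lemma E_getD {w : List (Fin 2)} {i c : ℕ} (h : i + c ≤ w.length) {q : ℕ} (hq : q < c) :
    (E w i c).getD q 0 = w.getD (i + q) 0 := by
  have h1 : q < (E w i c).length := by rw [E_length h]; exact hq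
  have h2 : i + q < w.length := by omega
  rw [List.getD_eq_getElem _ _ h1, List.getD_eq_getElem _ _ h2]
  simp [E]

lemma E_infix (w : List (Fin 2)) (i c : ℕ) : E w i c <:+: w :=
  ((w.drop i).take_prefix c).isInfix.trans (w.drop_suffix i).isInfix

lemma eq_of_getD {v v' : List (Fin 2)} (hl : v.length = v'.length)
    (h : ∀ k < v.length, v.getD k 0 = v'.getD k 0) : v = v' := by
  apply List.ext_getElem hl
  intro k h1 h2
  have := h k h1
  rwa [List.getD_eq_getElem _ _ h1, List.getD_eq_getElem _ _ h2] at this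

lemma infix_occ {v w : List (Fin 2)} (h : v <:+: w) :
    ∃ i, i + v.length ≤ w.length ∧ ∀ q < v.length, v.getD q 0 = w.getD (i + q) 0 := by
  obtain ⟨s, t, hst⟩ := h
  refine ⟨s.length, ?_, ?_⟩
  · subst hst; simp
  · intro q hq
    subst hst
    rw [List.append_assoc]
    rw [List.getD_append_right s (v ++ t) 0 (s.length + q) (Nat.le_add_right _ _)]
    rw [Nat.add_sub_cancel_left, List.getD_append _ _ _ _ hq]

lemma sigma_eq {r l r' l' : ℕ} (f : Fin r × Fin (2 * l) → Fin 2 × Fin 2)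
    (f' : Fin r' × Fin (2 * l') → Fin 2 × Fin 2) (h1 : r = r') (h2 : l = l')
    (h : ∀ a b (ha : a < r) (hb : b < 2 * l) (ha' : a < r') (hb' : b < 2 * l'),
      f (⟨a, ha⟩, ⟨b, hb⟩) = f' (⟨a, ha'⟩, ⟨b, hb'⟩)) :
    (⟨r, l, f⟩ : (r : ℕ) × (l : ℕ) × (Fin r × Fin (2 * l) → Fin 2 × Fin 2)) = ⟨r', l', f'⟩ := by
  subst h1; subst h2
  congr 1
  congr 1
  funext p
  obtain ⟨⟨a, ha⟩, ⟨b, hb⟩⟩ := p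
  exact h a b ha hb ha hb

abbrev Tan := (r : ℕ) × (l : ℕ) × (Fin r × Fin (2 * l) → Fin 2 × Fin 2)

noncomputable def Phi : List (Fin 2) × List (Fin 2) → Tan :=
  fun z => ⟨z.2.length, z.1.length,
    fun p => (z.2.getD p.1.val 0, (z.1 ++ z.1).getD p.2.val 0)⟩

noncomputable def psiX (s : Tan) : List (Fin 2) :=
  List.ofFn (n := s.2.1) fun q =>
    if h : 0 < s.1 then (s.2.2 (⟨0, h⟩, ⟨q.val, by have := q.isLt; omega⟩)).2 else 0

noncomputable def psiY (s : Tan) : List (Fin 2) :=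
  List.ofFn (n := s.1) fun p =>
    if h : 0 < s.2.1 then (s.2.2 (⟨p.val, p.isLt⟩, ⟨0, by omega⟩)).1 else 0

lemma psiX_Phi {x y : List (Fin 2)} (hy : y ≠ []) : psiX (Phi (x, y)) = x := by
  have hy' : 0 < y.length := List.length_pos_iff.mpr hy
  unfold psiX Phi
  simp only [dif_pos hy']
  have : (fun q : Fin x.length =>
      ((y.getD 0 0, (x ++ x).getD q.val 0)).2) = fun q : Fin x.length => x[q.val] := by
    funext q
    simp only
    rw [List.getD_append _ _ _ _ q.isLt, List.getD_eq_getElem _ _ q.isLt]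
  rw [this]
  exact List.ofFn_getElem (xs := x)

lemma psiY_Phi {x y : List (Fin 2)} (hx : x ≠ []) : psiY (Phi (x, y)) = y := by
  have hx' : 0 < x.length := List.length_pos_iff.mpr hx
  unfold psiY Phi
  simp only
  have : (fun p : Fin y.length =>
      if h : 0 < x.length then ((y.getD p.val 0, (x ++ x).getD 0 0)).1 else 0)
      = fun p : Fin y.length => y[p.val] := by
    funext p
    rw [dif_pos hx']
    exact List.getD_eq_getElem _ _ p.isLt
  rw [this]
  exact List.ofFn_getElem (xs := y)

/-- For m ≥ 2 and n ≥ 5, the number of distinct Type I(a) tandems in f_{m,n}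
(counted over all sizes (r,2l), r,l ≥ 1: distinct r × 2l arrays X occurring in f_{m,n}
whose left r × l half equals its right r × l half) equals D(n)·p(f_m). -/
theorem stmt8 (m n : ℕ) (hm : 2 ≤ m) (hn : 5 ≤ n) :
    {x : (r : ℕ) × (l : ℕ) × (Fin r × Fin (2 * l) → Fin 2 × Fin 2) |
      1 ≤ x.1 ∧ 1 ≤ x.2.1 ∧ occursIn m n x.1 (2 * x.2.1) x.2.2 ∧
      ∀ (p : Fin x.1) (q : Fin x.2.1),
        x.2.2 (p, ⟨q.val, by have := q.isLt; omega⟩)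
          = x.2.2 (p, ⟨q.val + x.2.1, by have := q.isLt; omega⟩)}.ncard
      = D n * pFact (fibWord m) := by
  classical
  set A : Set (List (Fin 2)) := {x | x ≠ [] ∧ x ++ x <:+: fibWord n} with hA
  set B : Set (List (Fin 2)) := {y | y ≠ [] ∧ y <:+: fibWord m} with hB
  have hFm : (fibWord m).length = F m := fibWord_length m
  have hFn : (fibWord n).length = F n := fibWord_length n
  -- image description
  have himg : {x : Tan |
      1 ≤ x.1 ∧ 1 ≤ x.2.1 ∧ occursIn m n x.1 (2 * x.2.1) x.2.2 ∧
      ∀ (p : Fin x.1) (q : Fin x.2.1),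
        x.2.2 (p, ⟨q.val, by have := q.isLt; omega⟩)
          = x.2.2 (p, ⟨q.val + x.2.1, by have := q.isLt; omega⟩)} = Phi '' (A ×ˢ B) := by
    ext s
    constructor
    · rintro ⟨hr, hl, ⟨i, j, hiF, hjF, hocc⟩, htan⟩
      obtain ⟨r, l, f⟩ := s
      simp only at hr hl hocc htan hiF hjF
      set x : List (Fin 2) := E (fibWord n) j l with hx
      set y : List (Fin 2) := E (fibWord m) i r with hy
      have hj2l : j + 2 * l ≤ (fibWord n).length := by omega
      have hjl : j + l ≤ (fibWord n).length := by omega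
      have hir : i + r ≤ (fibWord m).length := by omega
      have hxlen : x.length = l := E_length hjl
      have hylen : y.length = r := E_length hir
      have harr : ∀ a b (ha : a < r) (hb : b < 2 * l),
          f (⟨a, ha⟩, ⟨b, hb⟩) = ((fibWord m).getD (i + a) 0, (fibWord n).getD (j + b) 0) := by
        intro a b ha hb
        rw [hocc (⟨a, ha⟩, ⟨b, hb⟩)]
        exact fibArr_eq m n (i + a) (j + b) (by omega) (by omega)
      have hxx : x ++ x = E (fibWord n) j (2 * l) := by
        apply eq_of_getD
        · rw [List.length_append, hxlen, E_length hj2l]; omega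
        · intro k hk
          rw [List.length_append, hxlen] at hk
          rw [E_getD hj2l (by omega)]
          by_cases hkl : k < l
          · rw [List.getD_append _ _ _ _ (by omega), E_getD hjl hkl]
          · rw [List.getD_append_right _ _ _ _ (by omega), hxlen, E_getD hjl (by omega)]
            have h1 := htan ⟨0, by omega⟩ ⟨k - l, by omega⟩
            simp only at h1
            have h2 := congrArg Prod.snd
              ((harr 0 (k - l) (by omega) (by omega)).symm.trans
                (h1.trans (harr 0 (k - l + l) (by omega) (by omega))))
            simp only at h2
            rw [h2]
            congr 1
            omega
      have hxA : x ≠ [] ∧ x ++ x <:+: fibWord n := by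
        constructor
        · intro h; rw [h] at hxlen; simp at hxlen; omega
        · rw [hxx]; exact E_infix _ _ _
      have hyB : y ≠ [] ∧ y <:+: fibWord m := by
        constructor
        · intro h; rw [h] at hylen; simp at hylen; omega
        · exact E_infix _ _ _
      refine ⟨(x, y), ⟨hxA, hyB⟩, ?_⟩
      · show (⟨y.length, x.length, _⟩ : Tan) = ⟨r, l, f⟩
        apply sigma_eq _ _ hylen hxlen
        intro a b ha hb ha' hb'
        show (y.getD a 0, (x ++ x).getD b 0) = _
        rw [harr a b ha' hb', E_getD hir (by omega), hxx, E_getD hj2l (by omega)]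
    · rintro ⟨⟨x, y⟩, ⟨⟨hxne, hxinf⟩, ⟨hyne, hyinf⟩⟩, rfl⟩
      have hx' : 0 < x.length := List.length_pos_iff.mpr hxne
      have hy' : 0 < y.length := List.length_pos_iff.mpr hyne
      simp only [Prod.fst, Prod.snd] at hxne hxinf hyne hyinf
      obtain ⟨i, hi, hyget⟩ := infix_occ hyinf
      obtain ⟨j, hj, hxget⟩ := infix_occ hxinf
      simp only [Phi, Set.mem_setOf_eq]
      have hxxlen : (x ++ x).length = 2 * x.length := by simp [two_mul]
      refine ⟨hy', hx', ⟨i, j, by omega, by rw [hxxlen] at hj; omega, ?_⟩, ?_⟩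
      · rintro ⟨p, q⟩
        show (y.getD p.val 0, (x ++ x).getD q.val 0) = _
        rw [fibArr_eq m n (i + p.val) (j + q.val)
            (by have := p.isLt; omega)
            (by have := q.isLt; rw [hxxlen] at hj; omega)]
        rw [← hyget p.val p.isLt, ← hxget q.val (by rw [hxxlen]; exact q.isLt)]
      · intro p q
        show (y.getD p.val 0, (x ++ x).getD q.val 0)
          = (y.getD p.val 0, (x ++ x).getD (q.val + x.length) 0)
        rw [List.getD_append _ _ _ _ q.isLt,
          List.getD_append_right _ _ _ _ (Nat.le_add_left _ _), Nat.add_sub_cancel]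
  have hinj : Set.InjOn Phi (A ×ˢ B) := by
    rintro ⟨x, y⟩ ⟨⟨hxne, _⟩, ⟨hyne, _⟩⟩ ⟨x', y'⟩ ⟨⟨hxne', _⟩, ⟨hyne', _⟩⟩ h
    have h1 : x = x' := by rw [← psiX_Phi (x := x) hyne, h, psiX_Phi hyne']
    have h2 : y = y' := by rw [← psiY_Phi (y := y) hxne, h, psiY_Phi hxne']
    rw [h1, h2]
  rw [himg, Set.ncard_image_of_injOn hinj]
  have hprod : (A ×ˢ B).ncard = A.ncard * B.ncard := by
    rw [← Nat.card_coe_set_eq, ← Nat.card_coe_set_eq, ← Nat.card_coe_set_eq,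
      ← Nat.card_prod]
    exact Nat.card_congr (Equiv.Set.prod A B)
  rw [hprod]
  rfl
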